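/- arXiv:2107.01186 — 2 statements merged into one kernel-verified Lean document; each statement's English description precedes it below -/
import Mathlib

section
/- Negating the control of the ZH-gadget swaps its outputs: SWAP * G = G * (X ⊗ₖ I₂), where X := !![0,1;1,0] is the NOT matrix. -/
open Kronecker Matrix

/-- The ZH-gadget `G`, determined on the standard basis by
`G|00⟩ = |00⟩`, `G|01⟩ = |10⟩`, `G|10⟩ = |00⟩`, `G|11⟩ = |01⟩`. -/
def ZHgadget : Matrix (Fin 2 × Fin 2) (Fin 2 × Fin 2) ℂ :=
  Matrix.of fun q p =>
    if p.1 = 0 then (if q = (p.2, 0) then 1 else 0)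
    else (if q = (0, p.2) then 1 else 0)

/-- The SWAP permutation matrix, with `SWAP|ab⟩ = |ba⟩`. -/
def SWAP : Matrix (Fin 2 × Fin 2) (Fin 2 × Fin 2) ℂ :=
  Matrix.of fun q p => if q = (p.2, p.1) then 1 else 0

/-- Negating the control of the ZH-gadget swaps its outputs:
`SWAP * G = G * (X ⊗ₖ I₂)` where `X = !![0,1;1,0]` is the NOT matrix. -/
theorem ZHgadget_not_control :
    SWAP * ZHgadget = ZHgadget * ((!![0, 1; 1, 0] : Matrix (Fin 2) (Fin 2) ℂ) ⊗ₖ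
      (1 : Matrix (Fin 2) (Fin 2) ℂ)) := by
  ext ⟨a, b⟩ ⟨c, d⟩
  simp only [mul_apply, Fintype.sum_prod_type, SWAP, ZHgadget, kroneckerMap_apply,
    Matrix.one_apply, of_apply]
  fin_cases a <;> fin_cases b <;> fin_cases c <;> fin_cases d <;>
    simp [Fin.sum_univ_succ, Prod.ext_iff]
end

section
/- Every quantum state admits a state-QMDD representation: for every n : ℕ and every vector v : (Fin n → Fin 2) → ℂ (i.e. v ∈ ℂ^{2ⁿ}), there exists a state-QMDD 𝔇 of height H = n such that ⟦𝔇⟧ = v. -/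
/-- A state-QMDD (SQMDD): a tuple `(s, V, u₀, t, H, h, E, ω)` consisting of an overall
scalar `s`, a nonempty finite set of vertices `V` with a root `u₀` and a terminal node
`t` (which coincide only if `V` is a singleton), a height `H`, a height function
`h : V → {0,...,H}` vanishing exactly on `t`, an edge map `E` sending each non-terminal
vertex to an ordered pair of children of strictly smaller height, such that every
non-root vertex is a child of some vertex, and a weight map `ω` assigning a pair of
complex weights to the out-edges of each non-terminal vertex.  (`E` and `ω` are encoded
as total functions whose values on the terminal node are irrelevant.) -/
structure SQMDD where
  /-- the vertex set -/
  V : Type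
  fintypeV : Fintype V
  decEqV : DecidableEq V
  /-- the overall scalar -/
  s : ℂ
  /-- the root -/
  u₀ : V
  /-- the terminal node -/
  t : V
  /-- the height of the SQMDD -/
  H : ℕ
  /-- the height function -/
  h : V → ℕ
  h_le_H : ∀ v, h v ≤ H
  h_eq_zero_iff : ∀ v, h v = 0 ↔ v = t
  root_eq_terminal_iff : u₀ = t ↔ ∀ v, v = t
  /-- the edges: each non-terminal vertex has an ordered pair of children -/
  E : V → V × V
  child_height_lt : ∀ v, v ≠ t → h (E v).1 < h v ∧ h (E v).2 < h v
  has_parent : ∀ v, v ≠ u₀ → ∃ u, u ≠ t ∧ ((E u).1 = v ∨ (E u).2 = v)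
  /-- the weights on the two out-edges of each non-terminal vertex -/
  ω : V → ℂ × ℂ

/-- The value at bitstring `x` of the state represented by the vertex `u` of `D`,
read at height level `k`: at level `0` only the terminal node contributes (value `1`);
at level `k+1`, a vertex of height exactly `k+1` branches on the first bit, multiplying
by the corresponding edge weight, while a vertex of smaller height is skipped (both
branches lead to it, which graphically is the edge crossing the level).  This is
exactly the recursion `⟦𝔇⟧ = |0⟩ ⊗ ⟦ℓ(𝔇)⟧ + |1⟩ ⊗ ⟦r(𝔇)⟧` of the paper, expressed
pointwise. -/
noncomputable def SQMDD.val (D : SQMDD) : (k : ℕ) → D.V → (Fin k → Fin 2) → ℂ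
  | 0, u, _ => letI := D.decEqV; if u = D.t then 1 else 0
  | k + 1, u, x =>
    if D.h u = k + 1 then
      if x 0 = 0 then (D.ω u).1 * D.val k (D.E u).1 (fun i => x i.succ)
      else (D.ω u).2 * D.val k (D.E u).2 (fun i => x i.succ)
    else D.val k u (fun i => x i.succ)

/-- The interpretation `⟦𝔇⟧ ∈ ℂ^{2^H}` of an SQMDD `𝔇`: the overall scalar times the
value of the root read at the top height level. -/
noncomputable def SQMDD.interp (D : SQMDD) : (Fin D.H → Fin 2) → ℂ :=
  fun x => D.s * D.val D.H D.u₀ x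

-- construction
abbrev Vtx (n : ℕ) : Type := Option { l : List (Fin 2) // l.length < n }

def extv (n : ℕ) (l : List (Fin 2)) (b : Fin 2) : Fin n → Fin 2 :=
  fun i => if hi : (i : ℕ) < l.length then l.get ⟨i, hi⟩ else b

def glue (n : ℕ) (l : List (Fin 2)) {k : ℕ} (hl : l.length + k = n)
    (y : Fin k → Fin 2) : Fin n → Fin 2 :=
  fun i => if hi : (i : ℕ) < l.length then l.get ⟨i, hi⟩
           else y ⟨(i : ℕ) - l.length, by have := i.2; omega⟩

def mkH (n : ℕ) : Vtx n → ℕ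
  | none => 0
  | some l => n - l.1.length

def mkE (n : ℕ) : Vtx n → Vtx n × Vtx n
  | none => (none, none)
  | some ⟨l, _⟩ =>
    if h2 : l.length + 1 < n then
      (some ⟨l ++ [0], by simp; omega⟩, some ⟨l ++ [1], by simp; omega⟩)
    else (none, none)

def mkW (n : ℕ) (v : (Fin n → Fin 2) → ℂ) : Vtx n → ℂ × ℂ
  | none => (0, 0)
  | some ⟨l, _⟩ =>
    if l.length + 1 < n then (1, 1) else (v (extv n l 0), v (extv n l 1))

def mkRoot (n : ℕ) : Vtx n :=
  if h0 : 0 < n then some ⟨[], by simpa using h0⟩ else none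

noncomputable instance (n : ℕ) : Fintype { l : List (Fin 2) // l.length < n } :=
  Fintype.ofInjective (fun l (i : Fin n) => l.1[(i : ℕ)]?) (by
    intro l₁ l₂ hf
    apply Subtype.ext
    apply List.ext_getElem?
    intro i
    by_cases hi : i < n
    · exact congrFun hf ⟨i, hi⟩
    · rw [List.getElem?_eq_none (by have := l₁.2; omega),
        List.getElem?_eq_none (by have := l₂.2; omega)])

noncomputable def mkD (n : ℕ) (v : (Fin n → Fin 2) → ℂ) : SQMDD where
  V := Vtx n
  fintypeV := inferInstance
  decEqV := inferInstance
  s := if n = 0 then v (fun _ => 0) else 1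
  u₀ := mkRoot n
  t := none
  H := n
  h := mkH n
  h_le_H := by rintro (_ | l) <;> simp [mkH]
  h_eq_zero_iff := by
    rintro (_ | ⟨l, hl⟩)
    · simp [mkH]
    · simp [mkH]; omega
  root_eq_terminal_iff := by
    by_cases h0 : 0 < n
    · rw [mkRoot, dif_pos h0]
      simp only [reduceCtorEq, false_iff, not_forall]
      exact ⟨some ⟨[], by simpa using h0⟩, by simp⟩
    · rw [mkRoot, dif_neg h0]
      simp only [true_iff]
      rintro (_ | ⟨l, hl⟩)
      · rfl
      · omega
  E := mkE n
  child_height_lt := by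
    rintro (_ | ⟨l, hl⟩) hv
    · exact absurd rfl hv
    · by_cases h2 : l.length + 1 < n
      · simp only [mkE, dif_pos h2, mkH]
        simp only [List.length_append, List.length_cons, List.length_nil]
        omega
      · simp only [mkE, dif_neg h2, mkH]
        omega
  has_parent := by
    rintro (_ | ⟨l, hl⟩) hv
    · by_cases h0 : 0 < n
      · refine ⟨some ⟨List.replicate (n - 1) 0, by simp; omega⟩, by simp, ?_⟩
        left
        simp only [mkE]
        rw [dif_neg (by simp; omega)]
      · rw [mkRoot, dif_neg h0] at hv
        exact absurd rfl hv
    · have h0 : 0 < n := by omega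
      match l, hl, hv with
      | [], hl, hv =>
        rw [mkRoot, dif_pos h0] at hv
        exact absurd rfl hv
      | (a :: l'), hl, hv =>
        have hne : (a :: l') ≠ [] := by simp
        have hlen : (a :: l').dropLast.length = l'.length := by
          simp [List.length_dropLast]
        have hl' : l'.length + 1 < n := by simpa using hl
        have hdl : (a :: l').dropLast.length < n := by omega
        have h2 : (a :: l').dropLast.length + 1 < n := by omega
        refine ⟨some ⟨(a :: l').dropLast, hdl⟩, by simp, ?_⟩
        simp only [mkE, dif_pos h2, Option.some.injEq, Subtype.mk.injEq]
        by_cases hb : (a :: l').getLast hne = 0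
        · left
          conv_rhs => rw [← List.dropLast_append_getLast hne, hb]
        · right
          have hb1 : (a :: l').getLast hne = 1 := by omega
          conv_rhs => rw [← List.dropLast_append_getLast hne, hb1]
  ω := mkW n v

lemma fin2_eq_one {a : Fin 2} (h : a ≠ 0) : a = 1 := by
  fin_cases a
  · exact absurd rfl h
  · rfl

lemma glue_append (n : ℕ) (l : List (Fin 2)) {j : ℕ} (b : Fin 2)
    (hl : l.length + (j + 1) = n) (y : Fin (j + 1) → Fin 2) (hb : y 0 = b) :
    glue n (l ++ [b]) (by simp; omega) (fun i => y i.succ) = glue n l hl y := by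
  funext i
  simp only [glue, List.length_append, List.length_cons, List.length_nil,
    List.get_eq_getElem]
  rcases Nat.lt_trichotomy (i : ℕ) l.length with hi | hi | hi
  · rw [dif_pos (by omega), dif_pos hi]
    exact List.getElem_append_left hi
  · rw [dif_pos (by omega), dif_neg (by omega)]
    have h1 : (l ++ [b])[(i : ℕ)]'(by simp; omega) = b := by
      rw [List.getElem_append_right (by omega : l.length ≤ (i : ℕ))]
      simp [hi]
    rw [h1, ← hb]
    congr 1
    apply Fin.ext
    simp [hi]
  · rw [dif_neg (by omega), dif_neg (by omega)]
    congr 1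
    ext
    simp only [Fin.val_succ]
    omega

lemma mkD_val (n : ℕ) (v : (Fin n → Fin 2) → ℂ) :
    ∀ (k : ℕ) (hk : 1 ≤ k) (l : List (Fin 2)) (hl : l.length + k = n)
      (y : Fin k → Fin 2),
      (mkD n v).val k (some ⟨l, by omega⟩) y = v (glue n l hl y) := by
  intro k
  induction k with
  | zero => exact fun hk => absurd hk (by omega)
  | succ j ih =>
    intro hk l hl y
    refine (SQMDD.val.eq_2 _ _ _ _).trans ?_
    have hh : (mkD n v).h (some ⟨l, by omega⟩) = j + 1 := by
      simp only [mkD, mkH]; omega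
    rw [if_pos hh]
    by_cases hj : j = 0
    · subst hj
      have hE : (mkD n v).E (some ⟨l, by omega⟩) = (none, none) := by
        simp only [mkD, mkE]; rw [dif_neg (by omega)]
      have hW : (mkD n v).ω (some ⟨l, by omega⟩)
          = (v (extv n l 0), v (extv n l 1)) := by
        simp only [mkD, mkW]; rw [if_neg (by omega)]
      rw [hE, hW]
      have hval : ∀ z : Fin 0 → Fin 2, (mkD n v).val 0 none z = 1 := by
        intro z; refine (SQMDD.val.eq_1 _ _ _).trans ?_; simp [mkD]
      have key : ∀ b : Fin 2, y 0 = b → extv n l b = glue n l hl y := by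
        intro b hb
        funext i
        by_cases hi : (i : ℕ) < l.length
        · simp [extv, glue, hi]
        · simp only [extv, glue, dif_neg hi]
          rw [← hb]
          congr 1
          apply Fin.ext
          have h2 := i.2
          simp only [Fin.val_zero]
          omega
      by_cases hy : y 0 = 0
      · rw [if_pos hy, hval, mul_one, key 0 hy]
      · have hy1 : y 0 = 1 := fin2_eq_one hy
        rw [if_neg hy, hval, mul_one, key 1 hy1]
    · have h2 : l.length + 1 < n := by omega
      have hE : (mkD n v).E (some ⟨l, by omega⟩)
          = (some ⟨l ++ [0], by simp; omega⟩, some ⟨l ++ [1], by simp; omega⟩) := by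
        simp only [mkD, mkE]; rw [dif_pos h2]
      have hW : (mkD n v).ω (some ⟨l, by omega⟩) = (1, 1) := by
        simp only [mkD, mkW]; rw [if_pos h2]
      rw [hE, hW]
      by_cases hy : y 0 = 0
      · rw [if_pos hy]
        simp only [one_mul]
        rw [ih (by omega) (l ++ [0]) (by simp; omega) (fun i => y i.succ),
          glue_append n l 0 hl y hy]
      · have hy1 : y 0 = 1 := fin2_eq_one hy
        rw [if_neg hy]
        simp only [one_mul]
        rw [ih (by omega) (l ++ [1]) (by simp; omega) (fun i => y i.succ),
          glue_append n l 1 hl y hy1]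


/-- Every quantum state admits a state-QMDD representation: for every `n : ℕ` and every
vector `v ∈ ℂ^{2ⁿ}`, there exists an SQMDD `𝔇` of height `n` with `⟦𝔇⟧ = v`. -/
theorem exists_SQMDD_interp_eq (n : ℕ) (v : (Fin n → Fin 2) → ℂ) :
    ∃ (D : SQMDD) (hH : D.H = n), ∀ x : Fin n → Fin 2,
      D.interp (fun i => x (Fin.cast hH i)) = v x := by
  refine ⟨mkD n v, rfl, fun x => ?_⟩
  show (mkD n v).s * (mkD n v).val n (mkD n v).u₀ (fun i => x (Fin.cast rfl i)) = v x
  by_cases hn : n = 0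
  · subst hn
    have hroot : (mkD 0 v).u₀ = none := by
      simp only [mkD, mkRoot]; rw [dif_neg (by omega)]
    rw [hroot]
    refine (congrArg ((mkD 0 v).s * ·) (SQMDD.val.eq_1 _ _ _)).trans ?_
    have hx : v (fun _ => 0) = v x := by
      congr 1
      funext i
      exact i.elim0
    simp [mkD, hx]
  · have h1 : 1 ≤ n := by omega
    have hroot : (mkD n v).u₀ = some ⟨[], by simp; omega⟩ := by
      simp only [mkD, mkRoot]; rw [dif_pos (by omega)]
    have hs : (mkD n v).s = 1 := by
      simp only [mkD]; rw [if_neg hn]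
    rw [hroot, hs, one_mul,
      mkD_val n v n h1 [] (by simp) (fun i => x (Fin.cast rfl i))]
    congr 1
end
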